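/- Suppose 0 < Y < X are real numbers and f : [Y, X] → ℝ is monotonic and continuously differentiable on (Y, X), with one-sided limits f(Y+), f(X−), f′(Y+), f′(X−) existing. Then for all real γ and every integer k ≥ 1, |∫_Y^X f(w)·e(γ·w^k) dw| ≤ (|f(X−)| + |f(Y+)|) · 2X/(1 + Y^k·|γ|), where e(z) = e^{2πiz}. -/

import Mathlib

open Set MeasureTheory intervalIntegral Filter Real

noncomputable def Eph (γ : ℝ) (k : ℕ) (w : ℝ) : ℂ :=
  Complex.exp (2 * Real.pi * Complex.I * (γ * (w : ℂ) ^ k))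

lemma Eph_norm (γ : ℝ) (k : ℕ) (w : ℝ) : ‖Eph γ k w‖ = 1 := by
  rw [Eph, Complex.norm_exp]
  have : (2 * Real.pi * Complex.I * (γ * (w : ℂ) ^ k)).re = 0 := by
    simp [← Complex.ofReal_pow]
  rw [this, Real.exp_zero]

lemma Eph_continuous (γ : ℝ) (k : ℕ) : Continuous (Eph γ k) := by
  unfold Eph; fun_prop

lemma Eph_hasDerivAt (γ : ℝ) (k : ℕ) (w : ℝ) :
    HasDerivAt (Eph γ k) ((2 * Real.pi * Complex.I * γ * k * (w : ℂ) ^ (k - 1)) * Eph γ k w) w := by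
  have h1 : HasDerivAt (fun w : ℝ => ((w ^ k : ℝ) : ℂ)) (((k : ℝ) * w ^ (k - 1) : ℝ) : ℂ) w :=
    (hasDerivAt_pow k w).ofReal_comp
  have h2 := (h1.const_mul (2 * Real.pi * Complex.I * γ)).cexp
  have he : (fun w : ℝ => Complex.exp (2 * Real.pi * Complex.I * (γ:ℂ) * ((w ^ k : ℝ) : ℂ)))
      = Eph γ k := by
    funext w; unfold Eph; push_cast; ring_nf
  rw [he] at h2
  convert h2 using 1
  unfold Eph
  push_cast
  ring

lemma core (Y X c d : ℝ) (hY : 0 < Y) (hc : Y < c) (hcd : c < d) (hd : d < X)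
    (k : ℕ) (hk : 1 ≤ k) (γ : ℝ) (hγ : 0 < γ)
    (f f' : ℝ → ℝ)
    (hderiv : ∀ w ∈ Ioo Y X, HasDerivAt f (f' w) w)
    (hcont : ContinuousOn f' (Ioo Y X))
    (hsign : ∀ w ∈ Ioo Y X, 0 ≤ f' w)
    (M : ℝ) (hM : ∀ w ∈ Ioo Y X, |f w| ≤ M) :
    ‖∫ w in c..d, (f w : ℂ) * Eph γ k w‖ ≤
      (|f c| + |f d| + (f d - f c) + M) * (c ^ (k-1))⁻¹ / (2 * Real.pi * γ * k) := by
  have hc0 : 0 < c := hY.trans hc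
  have hcd' : c ≤ d := hcd.le
  have hsub : Icc c d ⊆ Ioo Y X := fun w hw => ⟨hc.trans_le hw.1, hw.2.trans_lt hd⟩
  have hwpos : ∀ w ∈ Icc c d, 0 < w := fun w hw => hc0.trans_le hw.1
  -- auxiliary functions
  set p : ℝ → ℝ := fun w => (w ^ (k-1))⁻¹ with hpdef
  set P : ℝ → ℝ := fun w => -(((k-1 : ℕ) : ℝ) * w ^ (k-1-1)) / (w ^ (k-1)) ^ 2 with hPdef
  have hp : ∀ w : ℝ, w ≠ 0 → HasDerivAt p (P w) w := fun w hw =>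
    (hasDerivAt_pow (k-1) w).inv (pow_ne_zero _ hw)
  set v : ℝ → ℝ := fun w => f w * p w with hvdef
  set v' : ℝ → ℝ := fun w => f' w * p w + f w * P w with hv'def
  have hv : ∀ w ∈ Icc c d, HasDerivAt v (v' w) w := fun w hw =>
    (hderiv w (hsub hw)).mul (hp w (hwpos w hw).ne')
  set C : ℂ := 2 * Real.pi * Complex.I * γ * k with hCdef
  have hCr : C = ((2 * Real.pi * γ * k : ℝ) : ℂ) * Complex.I := by push_cast; ring
  have hk0 : (0:ℝ) < k := by exact_mod_cast Nat.pos_of_ne_zero (by omega)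
  have hCpos : (0:ℝ) < 2 * Real.pi * γ * k := by positivity
  have hC : C ≠ 0 := by
    rw [hCr]
    exact mul_ne_zero (by exact_mod_cast hCpos.ne') Complex.I_ne_zero
  have hnC : ‖C‖ = 2 * Real.pi * γ * k := by
    rw [hCr, norm_mul, Complex.norm_I, mul_one, Complex.norm_real, Real.norm_eq_abs,
      abs_of_pos hCpos]
  -- G and its derivative
  set G : ℝ → ℂ := fun w => (v w : ℂ) * Eph γ k w / C with hGdef
  have hG : ∀ w ∈ Icc c d,
      HasDerivAt G ((v' w : ℂ) * Eph γ k w / C + (f w : ℂ) * Eph γ k w) w := by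
    intro w hw
    have h1 := ((hv w hw).ofReal_comp.mul (Eph_hasDerivAt γ k w)).div_const C
    convert h1 using 1
    case e'_4 => rfl
    case e'_8 => rfl
    have hw0 : (w:ℝ) ≠ 0 := (hwpos w hw).ne'
    have hvw : (v w : ℂ) * ((w:ℂ) ^ (k-1)) = (f w : ℂ) := by
      have : v w * w ^ (k-1) = f w := by
        rw [hvdef]; simp only
        rw [mul_assoc, inv_mul_cancel₀ (pow_ne_zero _ hw0), mul_one]
      calc (v w : ℂ) * ((w:ℂ) ^ (k-1)) = ((v w * w ^ (k-1) : ℝ) : ℂ) := by push_cast; ring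
        _ = (f w : ℂ) := by rw [this]
    field_simp
    linear_combination (-(Eph γ k w * (Real.pi:ℂ) * Complex.I * (γ:ℂ) * (k:ℂ) * 2)) * hvw
  -- continuity facts on Icc c d
  have hfc : ContinuousOn f (Icc c d) := fun w hw =>
    (hderiv w (hsub hw)).continuousAt.continuousWithinAt
  have hf'c : ContinuousOn f' (Icc c d) := hcont.mono hsub
  have hpc : ContinuousOn p (Icc c d) := by
    apply ContinuousOn.inv₀ (continuous_pow _).continuousOn
    exact fun w hw => pow_ne_zero _ (hwpos w hw).ne'
  have hPc : ContinuousOn P (Icc c d) := by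
    apply ContinuousOn.div (by fun_prop) (by fun_prop)
    exact fun w hw => pow_ne_zero _ (pow_ne_zero _ (hwpos w hw).ne')
  have hv'c : ContinuousOn v' (Icc c d) := (hf'c.mul hpc).add (hfc.mul hPc)
  have hEc : ContinuousOn (Eph γ k) (Icc c d) := (Eph_continuous γ k).continuousOn
  have hIcc : uIcc c d = Icc c d := uIcc_of_le hcd'
  have hov' : ContinuousOn (fun w => ((v' w : ℝ) : ℂ)) (Icc c d) :=
    Complex.continuous_ofReal.comp_continuousOn hv'c
  have hof : ContinuousOn (fun w => ((f w : ℝ) : ℂ)) (Icc c d) :=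
    Complex.continuous_ofReal.comp_continuousOn hfc
  have hint1 : IntervalIntegrable (fun w => (v' w : ℂ) * Eph γ k w / C) volume c d := by
    apply ContinuousOn.intervalIntegrable; rw [hIcc]
    exact (hov'.mul hEc).div_const C
  have hint2 : IntervalIntegrable (fun w => (f w : ℂ) * Eph γ k w) volume c d := by
    apply ContinuousOn.intervalIntegrable; rw [hIcc]
    exact hof.mul hEc
  have hftc : ∫ w in c..d, ((v' w : ℂ) * Eph γ k w / C + (f w : ℂ) * Eph γ k w)
      = G d - G c := by
    apply integral_eq_sub_of_hasDerivAt
    · intro w hw; exact hG w (hIcc ▸ hw)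
    · exact hint1.add hint2
  have hmain : (∫ w in c..d, (f w : ℂ) * Eph γ k w)
      = G d - G c - (∫ w in c..d, (v' w : ℂ) * Eph γ k w) / C := by
    rw [← hftc, integral_add hint1 hint2, intervalIntegral.integral_div]; ring
  -- positivity facts
  have hppos : ∀ w ∈ Icc c d, 0 < p w := fun w hw => by
    rw [hpdef]; exact inv_pos.2 (pow_pos (hwpos w hw) _)
  have hpmono : ∀ w ∈ Icc c d, p w ≤ p c := fun w hw => by
    rw [hpdef]; simp only
    exact inv_anti₀ (pow_pos hc0 _) (pow_le_pow_left₀ hc0.le hw.1 _)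
  have hPneg : ∀ w ∈ Icc c d, P w ≤ 0 := fun w hw => by
    rw [hPdef]; simp only
    apply div_nonpos_of_nonpos_of_nonneg
    · simp only [neg_nonpos]
      exact mul_nonneg (Nat.cast_nonneg _) (pow_nonneg (hwpos w hw).le _)
    · positivity
  have hM0 : 0 ≤ M := le_trans (abs_nonneg _) (hM c (hsub ⟨le_refl c, hcd'⟩))
  -- FTC for f and p on [c,d]
  have hIf : ∫ w in c..d, f' w = f d - f c := by
    apply integral_eq_sub_of_hasDerivAt
    · intro w hw; exact hderiv w (hsub (hIcc ▸ hw))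
    · apply ContinuousOn.intervalIntegrable; rw [hIcc]; exact hf'c
  have hIP : ∫ w in c..d, P w = p d - p c := by
    apply integral_eq_sub_of_hasDerivAt
    · intro w hw; exact hp w (hwpos w (hIcc ▸ hw)).ne'
    · apply ContinuousOn.intervalIntegrable; rw [hIcc]; exact hPc
  -- bound on the derivative-term integral
  set g : ℝ → ℝ := fun w => f' w * p c + M * (-P w) with hgdef
  have hgint : IntervalIntegrable g volume c d := by
    apply ContinuousOn.intervalIntegrable; rw [hIcc]
    exact (hf'c.mul continuousOn_const).add (continuousOn_const.mul hPc.neg)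
  have hfdc : 0 ≤ f d - f c := by
    rw [← hIf]
    exact intervalIntegral.integral_nonneg hcd' (fun w hw => hsign w (hsub hw))
  have hpcd : p d ≤ p c := hpmono d ⟨hcd', le_refl d⟩
  have hpd0 : 0 < p d := hppos d ⟨hcd', le_refl d⟩
  have hpc0 : 0 < p c := hppos c ⟨le_refl c, hcd'⟩
  have hbound : ‖∫ w in c..d, (v' w : ℂ) * Eph γ k w‖ ≤ |∫ w in c..d, g w| := by
    apply intervalIntegral.norm_integral_le_abs_of_norm_le ?_ hgint
    filter_upwards [ae_restrict_mem measurableSet_uIoc] with w hw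
    have hw' : w ∈ Icc c d := by
      rw [uIoc_of_le hcd'] at hw; exact ⟨hw.1.le, hw.2⟩
    have h1 : ‖(v' w : ℂ) * Eph γ k w‖ = |v' w| := by
      rw [norm_mul, Eph_norm, mul_one, Complex.norm_real, Real.norm_eq_abs]
    rw [h1, hgdef, hv'def]
    simp only
    calc |f' w * p w + f w * P w| ≤ |f' w * p w| + |f w * P w| := abs_add_le _ _
      _ ≤ f' w * p c + M * (-P w) := by
          apply add_le_add
          · rw [abs_of_nonneg (mul_nonneg (hsign w (hsub hw')) (hppos w hw').le)]
            exact mul_le_mul_of_nonneg_left (hpmono w hw') (hsign w (hsub hw'))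
          · rw [abs_mul, abs_of_nonpos (hPneg w hw')]
            exact mul_le_mul_of_nonneg_right (hM w (hsub hw')) (neg_nonneg.2 (hPneg w hw'))
  have hgval : ∫ w in c..d, g w = (f d - f c) * p c + M * (p c - p d) := by
    rw [hgdef]
    have i1 : IntervalIntegrable (fun w => f' w * p c) volume c d := by
      apply ContinuousOn.intervalIntegrable; rw [hIcc]
      exact hf'c.mul continuousOn_const
    have i2 : IntervalIntegrable (fun w => M * (-P w)) volume c d := by
      apply ContinuousOn.intervalIntegrable; rw [hIcc]
      exact continuousOn_const.mul hPc.neg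
    rw [integral_add i1 i2, intervalIntegral.integral_mul_const,
      intervalIntegral.integral_const_mul, hIf, intervalIntegral.integral_neg, hIP]
    ring
  have hbound' : ‖∫ w in c..d, (v' w : ℂ) * Eph γ k w‖ ≤ ((f d - f c) + M) * p c := by
    refine hbound.trans ?_
    rw [hgval, abs_of_nonneg]
    · have : M * (p c - p d) ≤ M * p c := by nlinarith
      nlinarith
    · have : 0 ≤ M * (p c - p d) := mul_nonneg hM0 (by linarith)
      nlinarith
  -- assemble
  rw [hmain]
  have hGd : ‖G d‖ ≤ |f d| * p c / (2 * Real.pi * γ * k) := by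
    rw [hGdef]; simp only
    rw [norm_div, norm_mul, Eph_norm, mul_one, Complex.norm_real, Real.norm_eq_abs, hnC]
    gcongr
    rw [hvdef]; simp only
    rw [abs_mul, abs_of_nonneg hpd0.le]
    exact mul_le_mul_of_nonneg_left hpcd (abs_nonneg _)
  have hGc : ‖G c‖ ≤ |f c| * p c / (2 * Real.pi * γ * k) := by
    rw [hGdef]; simp only
    rw [norm_div, norm_mul, Eph_norm, mul_one, Complex.norm_real, Real.norm_eq_abs, hnC]
    gcongr
    rw [hvdef]; simp only
    rw [abs_mul, abs_of_nonneg hpc0.le]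
  have hQ : ‖(∫ w in c..d, (v' w : ℂ) * Eph γ k w) / C‖
      ≤ ((f d - f c) + M) * p c / (2 * Real.pi * γ * k) := by
    rw [norm_div, hnC]
    gcongr
  calc ‖G d - G c - (∫ w in c..d, (v' w : ℂ) * Eph γ k w) / C‖
      ≤ ‖G d‖ + ‖G c‖ + ‖(∫ w in c..d, (v' w : ℂ) * Eph γ k w) / C‖ :=
        (norm_sub_le _ _).trans (add_le_add_left (norm_sub_le _ _) _)
    _ ≤ |f d| * p c / (2 * Real.pi * γ * k) + |f c| * p c / (2 * Real.pi * γ * k)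
        + ((f d - f c) + M) * p c / (2 * Real.pi * γ * k) :=
        add_le_add (add_le_add hGd hGc) hQ
    _ = (|f c| + |f d| + (f d - f c) + M) * p c / (2 * Real.pi * γ * k) := by ring

lemma key (Y X : ℝ) (hY : 0 < Y) (hYX : Y < X) (k : ℕ) (hk : 1 ≤ k)
    (f f' : ℝ → ℝ) (hmono : MonotoneOn f (Icc Y X))
    (hderiv : ∀ w ∈ Ioo Y X, HasDerivAt f (f' w) w)
    (hcont : ContinuousOn f' (Ioo Y X))
    (fYp fXm : ℝ)
    (hfY : Tendsto f (nhdsWithin Y (Ioi Y)) (nhds fYp))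
    (hfX : Tendsto f (nhdsWithin X (Iio X)) (nhds fXm))
    (γ : ℝ) (hγ : 0 ≤ γ) :
    ‖∫ w in Y..X, (f w : ℂ) * Eph γ k w‖
      ≤ (|fXm| + |fYp|) * (2 * X / (1 + Y ^ k * |γ|)) := by
  set M : ℝ := |fXm| + |fYp| with hMdef
  have hM0 : 0 ≤ M := add_nonneg (abs_nonneg _) (abs_nonneg _)
  -- bounds on f in the open interval
  have hlb : ∀ w ∈ Ioo Y X, fYp ≤ f w := by
    intro w hw
    apply le_of_tendsto hfY
    filter_upwards [Ioo_mem_nhdsGT_of_mem ⟨le_refl Y, hw.1⟩] with u hu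
    exact hmono ⟨hu.1.le, (hu.2.trans hw.2).le⟩ ⟨hw.1.le, hw.2.le⟩ hu.2.le
  have hub : ∀ w ∈ Ioo Y X, f w ≤ fXm := by
    intro w hw
    apply ge_of_tendsto hfX
    filter_upwards [Ioo_mem_nhdsLT_of_mem ⟨hw.2, le_refl X⟩] with u hu
    exact hmono ⟨hw.1.le, hw.2.le⟩ ⟨(hw.1.trans hu.1).le, hu.2.le⟩ hu.1.le
  have habs : ∀ w ∈ Ioo Y X, |f w| ≤ M := by
    intro w hw
    rw [abs_le]
    constructor
    · have := neg_abs_le fYp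
      have := hlb w hw
      rw [hMdef]
      have := abs_nonneg fXm
      linarith
    · have := le_abs_self fXm
      have := hub w hw
      rw [hMdef]
      have := abs_nonneg fYp
      linarith
  -- sign of the derivative
  have hsign : ∀ w ∈ Ioo Y X, 0 ≤ f' w := by
    intro w hw
    have hslope : Tendsto (slope f w) (nhdsWithin w (Ioi w)) (nhds (f' w)) :=
      ((hasDerivAt_iff_tendsto_slope.1 (hderiv w hw)).mono_left
        (nhdsWithin_mono w (fun u hu => ne_of_gt hu)))
    apply ge_of_tendsto hslope
    filter_upwards [Ioo_mem_nhdsGT_of_mem ⟨le_refl w, hw.2⟩] with u hu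
    rw [slope_def_field]
    apply div_nonneg _ (by linarith [hu.1] : (0:ℝ) ≤ u - w)
    have : f w ≤ f u := hmono ⟨hw.1.le, hw.2.le⟩ ⟨(hw.1.trans hu.1).le, hu.2.le⟩ hu.1.le
    linarith
  -- integrability on [Y, X]
  have hfInt : IntervalIntegrable f volume Y X := by
    apply MonotoneOn.intervalIntegrable
    rwa [uIcc_of_le hYX.le]
  have hIntWX : IntervalIntegrable (fun w => (f w : ℂ) * Eph γ k w) volume Y X := by
    have h1 : IntervalIntegrable (fun w => ((f w : ℝ) : ℂ)) volume Y X :=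
      ⟨hfInt.1.ofReal, hfInt.2.ofReal⟩
    exact h1.mul_continuousOn (Eph_continuous γ k).continuousOn
  -- uniform tail bound
  have bound3 : ∀ s t : ℝ, Y ≤ s → s ≤ t → t ≤ X →
      ‖∫ w in s..t, (f w : ℂ) * Eph γ k w‖ ≤ M * (t - s) := by
    intro s t hs hst htX
    have := intervalIntegral.norm_integral_le_of_norm_le_const_ae
      (a := s) (b := t) (C := M) (f := fun w => (f w : ℂ) * Eph γ k w) ?_
    · rwa [abs_of_nonneg (by linarith)] at this
    · have hae : ∀ᵐ x : ℝ, x ≠ X := by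
        refine ae_iff.2 ?_
        simpa using Real.volume_singleton
      filter_upwards [hae] with x hx hmem
      rw [uIoc_of_le hst] at hmem
      have hxIoo : x ∈ Ioo Y X :=
        ⟨hs.trans_lt hmem.1, lt_of_le_of_ne (hmem.2.trans htX) hx⟩
      rw [norm_mul, Eph_norm, mul_one, Complex.norm_real, Real.norm_eq_abs]
      exact habs x hxIoo
  rw [abs_of_nonneg hγ]
  have hYk : (0:ℝ) < Y ^ k := pow_pos hY k
  have hT0 : (0:ℝ) ≤ Y ^ k * γ := mul_nonneg hYk.le hγ
  rcases le_or_gt (Y ^ k * γ) 1 with hT | hT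
  · -- small gamma: trivial bound
    have h1 := bound3 Y X (le_refl Y) hYX.le (le_refl X)
    refine h1.trans ?_
    have hXpos : (0:ℝ) < X := hY.trans hYX
    have h2 : X - Y ≤ 2 * X / (1 + Y ^ k * γ) := by
      have : 2 * X / (1 + Y ^ k * γ) ≥ 2 * X / 2 := by
        apply div_le_div_of_nonneg_left (by linarith) (by linarith) (by linarith)
      linarith
    exact mul_le_mul_of_nonneg_left h2 hM0
  · -- oscillatory regime
    have hγ0 : 0 < γ := by
      rcases hγ.lt_or_eq with h | h
      · exact h
      · exfalso; rw [← h] at hT; simp at hT; linarith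
    -- sequences approaching the endpoints
    have hXY0 : (0:ℝ) < X - Y := by linarith
    set r : ℕ → ℝ := fun n => (X - Y) / (n + 3) with hrdef
    have hrpos : ∀ n : ℕ, 0 < r n := fun n => div_pos hXY0 (by positivity)
    have hrlt : ∀ n : ℕ, r n < (X - Y) / 2 := fun n => by
      rw [hrdef]
      apply div_lt_div_of_pos_left hXY0 (by norm_num)
      have : (0:ℝ) ≤ (n:ℝ) := Nat.cast_nonneg n
      linarith
    set c : ℕ → ℝ := fun n => Y + r n with hcdef
    set d : ℕ → ℝ := fun n => X - r n with hddef
    have hcY : ∀ n, Y < c n := fun n => by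
      rw [hcdef]; simp only; linarith [hrpos n]
    have hcd : ∀ n, c n < d n := fun n => by
      rw [hcdef, hddef]; simp only; linarith [hrlt n]
    have hdX : ∀ n, d n < X := fun n => by
      rw [hddef]; simp only; linarith [hrpos n]
    -- split the integral and bound each piece
    have hRn : ∀ n : ℕ, ‖∫ w in Y..X, (f w : ℂ) * Eph γ k w‖ ≤
        M * (c n - Y)
        + (|f (c n)| + |f (d n)| + (f (d n) - f (c n)) + M) * ((c n ^ (k-1))⁻¹)
            / (2 * Real.pi * γ * k)
        + M * (X - d n) := by
      intro n
      have hsub1 : IntervalIntegrable (fun w => (f w : ℂ) * Eph γ k w) volume Y (c n) := by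
        apply hIntWX.mono_set
        rw [uIcc_of_le (hcY n).le, uIcc_of_le hYX.le]
        exact Icc_subset_Icc (le_refl Y) ((hcd n).trans (hdX n)).le
      have hsub2 : IntervalIntegrable (fun w => (f w : ℂ) * Eph γ k w) volume (c n) (d n) := by
        apply hIntWX.mono_set
        rw [uIcc_of_le (hcd n).le, uIcc_of_le hYX.le]
        exact Icc_subset_Icc (hcY n).le (hdX n).le
      have hsub3 : IntervalIntegrable (fun w => (f w : ℂ) * Eph γ k w) volume (d n) X := by
        apply hIntWX.mono_set
        rw [uIcc_of_le (hdX n).le, uIcc_of_le hYX.le]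
        exact Icc_subset_Icc ((hcY n).trans (hcd n)).le (le_refl X)
      have e1 : (∫ w in Y..X, (f w : ℂ) * Eph γ k w)
          = (∫ w in Y..c n, (f w : ℂ) * Eph γ k w)
            + (∫ w in c n..d n, (f w : ℂ) * Eph γ k w)
            + (∫ w in d n..X, (f w : ℂ) * Eph γ k w) := by
        rw [intervalIntegral.integral_add_adjacent_intervals hsub1 hsub2,
          intervalIntegral.integral_add_adjacent_intervals (hsub1.trans hsub2) hsub3]
      rw [e1]
      have b1 := bound3 Y (c n) (le_refl Y) (hcY n).le ((hcd n).trans (hdX n)).le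
      have b3 := bound3 (d n) X ((hcY n).trans (hcd n)).le (hdX n).le (le_refl X)
      have b2 := core Y X (c n) (d n) hY (hcY n) (hcd n) (hdX n) k hk γ hγ0
        f f' hderiv hcont hsign M habs
      calc ‖_ + _ + _‖ ≤ ‖(∫ w in Y..c n, (f w : ℂ) * Eph γ k w)
            + (∫ w in c n..d n, (f w : ℂ) * Eph γ k w)‖
            + ‖∫ w in d n..X, (f w : ℂ) * Eph γ k w‖ := norm_add_le _ _
        _ ≤ ‖∫ w in Y..c n, (f w : ℂ) * Eph γ k w‖
            + ‖∫ w in c n..d n, (f w : ℂ) * Eph γ k w‖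
            + ‖∫ w in d n..X, (f w : ℂ) * Eph γ k w‖ :=
            add_le_add_left (norm_add_le _ _) _
        _ ≤ _ := add_le_add (add_le_add b1 b2) b3
    -- limits
    have hr0 : Tendsto r atTop (nhds 0) := by
      apply Tendsto.div_atTop tendsto_const_nhds
      apply Filter.tendsto_atTop_add_const_right
      exact tendsto_natCast_atTop_atTop
    have hctend : Tendsto c atTop (nhds Y) := by
      rw [hcdef]
      simpa using tendsto_const_nhds.add hr0
    have hdtend : Tendsto d atTop (nhds X) := by
      rw [hddef]
      simpa using tendsto_const_nhds.sub hr0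
    have hcin : Tendsto c atTop (nhdsWithin Y (Ioi Y)) :=
      tendsto_nhdsWithin_of_tendsto_nhds_of_eventually_within _ hctend
        (Eventually.of_forall hcY)
    have hdin : Tendsto d atTop (nhdsWithin X (Iio X)) :=
      tendsto_nhdsWithin_of_tendsto_nhds_of_eventually_within _ hdtend
        (Eventually.of_forall hdX)
    have hfc : Tendsto (fun n => f (c n)) atTop (nhds fYp) := hfY.comp hcin
    have hfd : Tendsto (fun n => f (d n)) atTop (nhds fXm) := hfX.comp hdin
    have hprod : Tendsto (fun n =>
        M * (c n - Y)
        + (|f (c n)| + |f (d n)| + (f (d n) - f (c n)) + M) * ((c n ^ (k-1))⁻¹)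
            / (2 * Real.pi * γ * k)
        + M * (X - d n)) atTop
        (nhds (M * (Y - Y)
          + (|fYp| + |fXm| + (fXm - fYp) + M) * ((Y ^ (k-1))⁻¹) / (2 * Real.pi * γ * k)
          + M * (X - X))) := by
      apply Tendsto.add
      apply Tendsto.add
      · exact tendsto_const_nhds.mul (hctend.sub tendsto_const_nhds)
      · exact ((((hfc.abs.add hfd.abs).add (hfd.sub hfc)).add tendsto_const_nhds).mul
          ((hctend.pow (k-1)).inv₀ (pow_ne_zero _ hY.ne'))).div_const _
      · exact tendsto_const_nhds.mul (tendsto_const_nhds.sub hdtend)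
    have hIL := ge_of_tendsto hprod (Eventually.of_forall hRn)
    simp only [sub_self, mul_zero, zero_add, add_zero] at hIL
    refine hIL.trans ?_
    -- final numeric estimate
    have hkR : (1:ℝ) ≤ k := by exact_mod_cast hk
    have hA : (0:ℝ) < Y ^ (k-1) := pow_pos hY _
    have hAB : Y ^ (k-1) * Y = Y ^ k := by
      rw [← pow_succ]; congr 1; omega
    have hAinv : (Y ^ (k-1))⁻¹ = Y * (Y ^ k)⁻¹ := by
      field_simp
      linarith [hAB]
    have hD1 : (0:ℝ) < 2 * Real.pi * γ * k := by
      have := Real.pi_pos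
      positivity
    have hD2 : (0:ℝ) < 1 + Y ^ k * γ := by positivity
    have hinv : Y ^ k * (Y ^ k)⁻¹ = 1 := mul_inv_cancel₀ hYk.ne'
    have hinvle : (Y ^ k)⁻¹ ≤ γ := by
      have h0 : (0:ℝ) < (Y ^ k)⁻¹ := inv_pos.2 hYk
      nlinarith
    have hmain2 : (3 * (Y * (Y ^ k)⁻¹)) / (2 * Real.pi * γ * k) ≤ 2 * X / (1 + Y ^ k * γ) := by
      rw [div_le_div_iff₀ hD1 hD2]
      have hpi := Real.pi_gt_three
      have hXpos : (0:ℝ) < X := hY.trans hYX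
      nlinarith [mul_le_mul_of_nonneg_left hinvle (by linarith : (0:ℝ) ≤ 3 * Y),
        mul_pos hγ0 hXpos, mul_pos hγ0 hY,
        mul_le_mul_of_nonneg_left hkR (by positivity : (0:ℝ) ≤ 2 * Real.pi * γ * X),
        mul_lt_mul_of_pos_right hYX (mul_pos hγ0 (by norm_num : (0:ℝ) < 12))]
    have h3 : |fYp| + |fXm| + (fXm - fYp) + M ≤ 3 * M := by
      have := le_abs_self fXm
      have := neg_abs_le fYp
      rw [hMdef]; linarith
    calc (|fYp| + |fXm| + (fXm - fYp) + M) * ((Y ^ (k-1))⁻¹) / (2 * Real.pi * γ * k)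
        ≤ (3 * M) * ((Y ^ (k-1))⁻¹) / (2 * Real.pi * γ * k) := by
          gcongr
      _ = M * ((3 * (Y * (Y ^ k)⁻¹)) / (2 * Real.pi * γ * k)) := by
          rw [hAinv]; ring
      _ ≤ M * (2 * X / (1 + Y ^ k * γ)) := mul_le_mul_of_nonneg_left hmain2 hM0

lemma key2 (Y X : ℝ) (hY : 0 < Y) (hYX : Y < X) (k : ℕ) (hk : 1 ≤ k)
    (f f' : ℝ → ℝ)
    (hmono : MonotoneOn f (Icc Y X) ∨ AntitoneOn f (Icc Y X))
    (hderiv : ∀ w ∈ Ioo Y X, HasDerivAt f (f' w) w)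
    (hcont : ContinuousOn f' (Ioo Y X))
    (fYp fXm : ℝ)
    (hfY : Tendsto f (nhdsWithin Y (Ioi Y)) (nhds fYp))
    (hfX : Tendsto f (nhdsWithin X (Iio X)) (nhds fXm))
    (γ : ℝ) (hγ : 0 ≤ γ) :
    ‖∫ w in Y..X, (f w : ℂ) * Eph γ k w‖
      ≤ (|fXm| + |fYp|) * (2 * X / (1 + Y ^ k * |γ|)) := by
  rcases hmono with hm | hm
  · exact key Y X hY hYX k hk f f' hm hderiv hcont fYp fXm hfY hfX γ hγ
  · have h := key Y X hY hYX k hk (fun w => -f w) (fun w => -f' w) (hm.neg)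
      (fun w hw => (hderiv w hw).neg) hcont.neg (-fYp) (-fXm) hfY.neg hfX.neg γ hγ
    have e : (∫ w in Y..X, ((-f w : ℝ) : ℂ) * Eph γ k w)
        = -(∫ w in Y..X, (f w : ℂ) * Eph γ k w) := by
      rw [← intervalIntegral.integral_neg]
      congr 1; funext w; push_cast; ring
    rw [e, norm_neg, abs_neg, abs_neg] at h
    exact h


/-- Suppose `0 < Y < X` and `f : [Y, X] → ℝ` is monotonic and continuously
differentiable on `(Y, X)`, with one-sided limits `f(Y+)`, `f(X−)`, `f′(Y+)`, `f′(X−)`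
existing. Then for all real `γ` and every integer `k ≥ 1`,
`|∫_Y^X f(w)·e(γ·w^k) dw| ≤ (|f(X−)| + |f(Y+)|)·2X/(1 + Y^k·|γ|)`,
where `e(z) = e^{2πiz}`. -/
theorem stmt7 (Y X : ℝ) (hY : 0 < Y) (hYX : Y < X) (k : ℕ) (hk : 1 ≤ k)
    (f f' : ℝ → ℝ)
    (hmono : MonotoneOn f (Set.Icc Y X) ∨ AntitoneOn f (Set.Icc Y X))
    (hderiv : ∀ w ∈ Set.Ioo Y X, HasDerivAt f (f' w) w)
    (hcont : ContinuousOn f' (Set.Ioo Y X))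
    (fYp fXm dYp dXm : ℝ)
    (hfY : Filter.Tendsto f (nhdsWithin Y (Set.Ioi Y)) (nhds fYp))
    (hfX : Filter.Tendsto f (nhdsWithin X (Set.Iio X)) (nhds fXm))
    (hdY : Filter.Tendsto f' (nhdsWithin Y (Set.Ioi Y)) (nhds dYp))
    (hdX : Filter.Tendsto f' (nhdsWithin X (Set.Iio X)) (nhds dXm))
    (γ : ℝ) :
    ‖∫ w in Y..X, (f w : ℂ) *
        Complex.exp (2 * Real.pi * Complex.I * (γ * (w : ℂ) ^ k))‖
      ≤ (|fXm| + |fYp|) * (2 * X / (1 + Y ^ k * |γ|)) := by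
  rcases le_or_gt 0 γ with h | h
  · have := key2 Y X hY hYX k hk f f' hmono hderiv hcont fYp fXm hfY hfX γ h
    simpa [Eph] using this
  · have h2 := key2 Y X hY hYX k hk f f' hmono hderiv hcont fYp fXm hfY hfX (-γ)
      (by linarith)
    have hEconj : ∀ w : ℝ, (starRingEnd ℂ) (Eph γ k w) = Eph (-γ) k w := by
      intro w
      rw [Eph, Eph, ← Complex.exp_conj]
      congr 1
      simp only [map_mul, Complex.conj_I, map_ofNat, Complex.conj_ofReal, map_pow]
      push_cast
      ring
    have hconjint : (∫ w in Y..X, (f w : ℂ) * Eph (-γ) k w)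
        = (starRingEnd ℂ) (∫ w in Y..X, (f w : ℂ) * Eph γ k w) := by
      rw [intervalIntegral.integral_of_le hYX.le, intervalIntegral.integral_of_le hYX.le,
        ← integral_conj]
      simp only [map_mul, Complex.conj_ofReal, hEconj]
    rw [hconjint, RCLike.norm_conj, abs_neg] at h2
    simpa [Eph] using h2
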